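/- Under the assumptions: unique-best-prediction margin c (i.e., η̂_{y*}^T h(x,s) - η̂_y^T h(x,s) > c‖η̂‖₂ for all y ≠ y*), penultimate features bounded by β, and marginal probabilities p(y|x;θ̂) ≥ 1/b for all y with b ≥ k, the likelihood gap between the unconstrained MLE θ̂ and the MLE θ̂_δ constrained to V(D;θ) ≤ δ satisfies Δ_l(θ̂, θ̂_δ) = (1/n)(l(D;θ̂) - l(D;θ̂_δ)) ≤ c₁ β² (‖η̂‖₂ - δ/(4β))² e^{-c₂ δ/(4β)}, where c₁ = 2dk(k-1)(b+1) and c₂ = c, provided δ/(4β) ≤ ‖η̂‖₂. -/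

import Mathlib

open MeasureTheory Finset

/-- Softmax over `k` classes with parameters `η` applied to features `u`. -/
noncomputable def smax {k d : ℕ} (η : Fin k → Fin d → ℝ) (u : Fin d → ℝ) (y : Fin k) : ℝ :=
  Real.exp (∑ i, η y i * u i) / ∑ y', Real.exp (∑ i, η y' i * u i)

namespace SMX

variable {k : ℕ}

noncomputable def Sf (c w : Fin k → ℝ) (t : ℝ) : ℝ := ∑ y, Real.exp (c y + t * w y)
noncomputable def Pf (c w : Fin k → ℝ) (t : ℝ) (y : Fin k) : ℝ :=
  Real.exp (c y + t * w y) / Sf c w t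
noncomputable def Tf (c w : Fin k → ℝ) (t : ℝ) : ℝ := ∑ y, Real.exp (c y + t * w y) * w y
noncomputable def Uf (c w : Fin k → ℝ) (t : ℝ) : ℝ := ∑ y, Real.exp (c y + t * w y) * w y ^ 2
noncomputable def Mf (c w : Fin k → ℝ) (t : ℝ) : ℝ := Tf c w t / Sf c w t
noncomputable def Vf (c w : Fin k → ℝ) (t : ℝ) : ℝ := Uf c w t / Sf c w t - Mf c w t ^ 2

variable {c w : Fin k → ℝ} {t : ℝ}

lemma Sf_pos (y₀ : Fin k) : 0 < Sf c w t :=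
  Finset.sum_pos (fun y _ => Real.exp_pos _) ⟨y₀, mem_univ _⟩

lemma Pf_nonneg (y : Fin k) : 0 ≤ Pf c w t y :=
  div_nonneg (Real.exp_pos _).le (le_of_lt (Sf_pos y))

lemma Pf_pos (y : Fin k) : 0 < Pf c w t y := div_pos (Real.exp_pos _) (Sf_pos y)

lemma Pf_le_one (y : Fin k) : Pf c w t y ≤ 1 := by
  rw [Pf, div_le_one (Sf_pos y)]
  exact Finset.single_le_sum (f := fun y => Real.exp (c y + t * w y))
    (fun y _ => (Real.exp_pos _).le) (mem_univ y)

lemma sum_Pf (y₀ : Fin k) : ∑ y, Pf c w t y = 1 := by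
  simp only [Pf]
  rw [← Finset.sum_div]
  exact div_self (ne_of_gt (Sf_pos y₀))

lemma Pf_mul_Sf (y : Fin k) : Pf c w t y * Sf c w t = Real.exp (c y + t * w y) :=
  div_mul_cancel₀ _ (ne_of_gt (Sf_pos y))

lemma Mf_eq_sum (y₀ : Fin k) : Mf c w t = ∑ y, Pf c w t y * w y := by
  rw [Mf, Tf, Finset.sum_div]
  exact Finset.sum_congr rfl fun y _ => by rw [Pf, div_mul_eq_mul_div]

lemma Uf_div_eq_sum (y₀ : Fin k) : Uf c w t / Sf c w t = ∑ y, Pf c w t y * w y ^ 2 := by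
  rw [Uf, Finset.sum_div]
  exact Finset.sum_congr rfl fun y _ => by rw [Pf, div_mul_eq_mul_div]

lemma Vf_eq_sum (y₀ : Fin k) : Vf c w t = ∑ y, Pf c w t y * (w y - Mf c w t) ^ 2 := by
  have h1 := sum_Pf (c := c) (w := w) (t := t) y₀
  have h2 := Mf_eq_sum (c := c) (w := w) (t := t) y₀
  have h3 := Uf_div_eq_sum (c := c) (w := w) (t := t) y₀
  have : ∑ y, Pf c w t y * (w y - Mf c w t) ^ 2
      = ∑ y, (Pf c w t y * w y ^ 2 - 2 * Mf c w t * (Pf c w t y * w y)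
          + Mf c w t ^ 2 * Pf c w t y) :=
    Finset.sum_congr rfl fun y _ => by ring
  rw [this, Finset.sum_add_distrib, Finset.sum_sub_distrib, ← Finset.mul_sum, ← Finset.mul_sum,
    ← h3, ← h2, h1, Vf]
  ring

lemma Vf_nonneg (y₀ : Fin k) : 0 ≤ Vf c w t := by
  rw [Vf_eq_sum y₀]
  exact Finset.sum_nonneg fun y _ => mul_nonneg (Pf_nonneg y) (sq_nonneg _)

lemma sub_Mf_eq (y₀ : Fin k) :
    w y₀ - Mf c w t = ∑ y, Pf c w t y * (w y₀ - w y) := by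
  have h1 := sum_Pf (c := c) (w := w) (t := t) y₀
  have h2 := Mf_eq_sum (c := c) (w := w) (t := t) y₀
  have : ∑ y, Pf c w t y * (w y₀ - w y)
      = (∑ y, Pf c w t y) * w y₀ - ∑ y, Pf c w t y * w y := by
    rw [Finset.sum_mul, ← Finset.sum_sub_distrib]
    exact Finset.sum_congr rfl fun y _ => by ring
  rw [this, h1, ← h2]; ring

lemma abs_sub_Mf_le {B : ℝ} (hw : ∀ y, |w y| ≤ B) (y₀ : Fin k) :
    |w y₀ - Mf c w t| ≤ 2 * B := by
  rw [sub_Mf_eq y₀]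
  calc |∑ y, Pf c w t y * (w y₀ - w y)| ≤ ∑ y, |Pf c w t y * (w y₀ - w y)| :=
        Finset.abs_sum_le_sum_abs _ _
    _ ≤ ∑ y, Pf c w t y * (2 * B) := by
        refine Finset.sum_le_sum fun y _ => ?_
        rw [abs_mul, abs_of_nonneg (Pf_nonneg y)]
        refine mul_le_mul_of_nonneg_left ?_ (Pf_nonneg y)
        calc |w y₀ - w y| ≤ |w y₀| + |w y| := abs_sub _ _
          _ ≤ B + B := add_le_add (hw y₀) (hw y)
          _ = 2 * B := by ring
    _ = 2 * B := by rw [← Finset.sum_mul, sum_Pf y₀, one_mul]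

lemma Vf_le {B : ℝ} (hw : ∀ y, |w y| ≤ B) (y₀ : Fin k) : Vf c w t ≤ 4 * B ^ 2 := by
  rw [Vf_eq_sum y₀]
  calc ∑ y, Pf c w t y * (w y - Mf c w t) ^ 2 ≤ ∑ y, Pf c w t y * (4 * B ^ 2) := by
        refine Finset.sum_le_sum fun y _ => mul_le_mul_of_nonneg_left ?_ (Pf_nonneg y)
        have h := abs_sub_Mf_le (c := c) (t := t) hw y
        have h0 : (0:ℝ) ≤ |w y - Mf c w t| := abs_nonneg _
        have h1 : (w y - Mf c w t) ^ 2 = |w y - Mf c w t| ^ 2 := (sq_abs _).symm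
        nlinarith
    _ = 4 * B ^ 2 := by rw [← Finset.sum_mul, sum_Pf y₀, one_mul]

lemma hasDerivAt_Sf : HasDerivAt (Sf c w) (Tf c w t) t := by
  have : ∀ y ∈ (univ : Finset (Fin k)), HasDerivAt (fun t => Real.exp (c y + t * w y))
      (Real.exp (c y + t * w y) * w y) t := by
    intro y _
    exact (((hasDerivAt_mul_const (w y)).const_add (c y)).exp)
  exact HasDerivAt.fun_sum this

lemma hasDerivAt_Tf : HasDerivAt (Tf c w) (Uf c w t) t := by
  have : ∀ y ∈ (univ : Finset (Fin k)), HasDerivAt (fun t => Real.exp (c y + t * w y) * w y)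
      (Real.exp (c y + t * w y) * w y ^ 2) t := by
    intro y _
    have h1 : HasDerivAt (fun t => Real.exp (c y + t * w y))
        (Real.exp (c y + t * w y) * w y) t :=
      (((hasDerivAt_mul_const (w y)).const_add (c y)).exp)
    have h := h1.mul_const (w y)
    exact h.congr_deriv (by ring)
  exact HasDerivAt.fun_sum this

lemma hasDerivAt_Pf (y₀ : Fin k) :
    HasDerivAt (fun t => Pf c w t y₀) (Pf c w t y₀ * (w y₀ - Mf c w t)) t := by
  have hS : Sf c w t ≠ 0 := ne_of_gt (Sf_pos y₀)
  have h1 : HasDerivAt (fun t => Real.exp (c y₀ + t * w y₀))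
      (Real.exp (c y₀ + t * w y₀) * w y₀) t :=
    (((hasDerivAt_mul_const (w y₀)).const_add (c y₀)).exp)
  have h := h1.div (hasDerivAt_Sf (c := c) (w := w) (t := t)) hS
  refine h.congr_deriv (Eq.symm ?_)
  rw [Pf, Mf]
  field_simp

lemma hasDerivAt_Mf (y₀ : Fin k) : HasDerivAt (Mf c w) (Vf c w t) t := by
  have hS : Sf c w t ≠ 0 := ne_of_gt (Sf_pos y₀)
  have h := (hasDerivAt_Tf (c := c) (w := w) (t := t)).div
    (hasDerivAt_Sf (c := c) (w := w) (t := t)) hS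
  refine h.congr_deriv (Eq.symm ?_)
  rw [Vf, Mf]
  field_simp

lemma hasDerivAt_Pf_mul (y₀ : Fin k) :
    HasDerivAt (fun t => Pf c w t y₀ * (w y₀ - Mf c w t))
      (Pf c w t y₀ * ((w y₀ - Mf c w t) ^ 2 - Vf c w t)) t := by
  have h := (hasDerivAt_Pf (c := c) (w := w) (t := t) y₀).mul
    ((hasDerivAt_Mf (c := c) (w := w) (t := t) y₀).const_sub (w y₀))
  refine h.congr_deriv (Eq.symm ?_)
  ring

end SMX

namespace SMX2
open SMX

variable {k : ℕ} {w : Fin k → ℝ} {t B Mg : ℝ}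

/-- zero offset softmax: margin bound on individual probabilities. -/
lemma Pf_le_margin (ht : 0 ≤ t) {ystar : Fin k}
    (hmg : ∀ y, y ≠ ystar → w y + Mg ≤ w ystar) {y : Fin k} (hy : y ≠ ystar) :
    Pf (fun _ => 0) w t y ≤ Real.exp (-(t * Mg)) := by
  have hS : Real.exp ((fun _ => (0:ℝ)) ystar + t * w ystar) ≤ Sf (fun _ => 0) w t :=
    Finset.single_le_sum (f := fun y => Real.exp ((0:ℝ) + t * w y))
      (fun y _ => (Real.exp_pos _).le) (mem_univ ystar)
  have hSpos : (0:ℝ) < Sf (fun _ => (0:ℝ)) w t := Sf_pos ystar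
  have h1 : Pf (fun _ => 0) w t y ≤ Real.exp ((0:ℝ) + t * w y) / Real.exp ((0:ℝ) + t * w ystar) := by
    rw [Pf]
    exact div_le_div_of_nonneg_left (Real.exp_pos _).le (Real.exp_pos _) hS
  refine h1.trans ?_
  rw [← Real.exp_sub]
  apply Real.exp_le_exp.2
  have := hmg y hy
  nlinarith
lemma sum_erase_Pf_le_margin (ht : 0 ≤ t) {ystar : Fin k}
    (hmg : ∀ y, y ≠ ystar → w y + Mg ≤ w ystar) :
    ∑ y ∈ univ.erase ystar, Pf (fun _ => 0) w t y ≤ ((k - 1 : ℕ) : ℝ) * Real.exp (-(t * Mg)) := by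
  have h1 : ∀ y ∈ univ.erase ystar, Pf (fun _ => 0) w t y ≤ Real.exp (-(t * Mg)) := by
    intro y hy
    exact Pf_le_margin ht hmg (Finset.ne_of_mem_erase hy)
  calc ∑ y ∈ univ.erase ystar, Pf (fun _ => 0) w t y
      ≤ ∑ _y ∈ univ.erase ystar, Real.exp (-(t * Mg)) := Finset.sum_le_sum h1
    _ = ((k - 1 : ℕ) : ℝ) * Real.exp (-(t * Mg)) := by
        rw [Finset.sum_const, nsmul_eq_mul, Finset.card_erase_of_mem (mem_univ _), card_univ,
          Fintype.card_fin]

lemma abs_star_sub_Mf_margin (ht : 0 ≤ t) (hB : 0 ≤ B) (hw : ∀ y, |w y| ≤ B) {ystar : Fin k}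
    (hmg : ∀ y, y ≠ ystar → w y + Mg ≤ w ystar) :
    |w ystar - Mf (fun _ => 0) w t| ≤ 2 * B * (((k - 1 : ℕ) : ℝ) * Real.exp (-(t * Mg))) := by
  rw [sub_Mf_eq ystar]
  have hz : ∀ y, Pf (fun _ => (0:ℝ)) w t y * (w ystar - w y) = 0 → True := fun _ _ => trivial
  have hsplit : ∑ y, Pf (fun _ => (0:ℝ)) w t y * (w ystar - w y)
      = ∑ y ∈ univ.erase ystar, Pf (fun _ => (0:ℝ)) w t y * (w ystar - w y) := by
    rw [← Finset.sum_erase_add _ _ (mem_univ ystar)]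
    simp
  rw [hsplit]
  calc |∑ y ∈ univ.erase ystar, Pf (fun _ => (0:ℝ)) w t y * (w ystar - w y)|
      ≤ ∑ y ∈ univ.erase ystar, |Pf (fun _ => (0:ℝ)) w t y * (w ystar - w y)| :=
        Finset.abs_sum_le_sum_abs _ _
    _ ≤ ∑ y ∈ univ.erase ystar, Pf (fun _ => (0:ℝ)) w t y * (2 * B) := by
        refine Finset.sum_le_sum fun y _ => ?_
        rw [abs_mul, abs_of_nonneg (Pf_nonneg y)]
        refine mul_le_mul_of_nonneg_left ?_ (Pf_nonneg y)
        calc |w ystar - w y| ≤ |w ystar| + |w y| := abs_sub _ _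
          _ ≤ B + B := add_le_add (hw ystar) (hw y)
          _ = 2 * B := by ring
    _ = (∑ y ∈ univ.erase ystar, Pf (fun _ => (0:ℝ)) w t y) * (2 * B) := by
        rw [Finset.sum_mul]
    _ ≤ (((k - 1 : ℕ) : ℝ) * Real.exp (-(t * Mg))) * (2 * B) := by
        refine mul_le_mul_of_nonneg_right (sum_erase_Pf_le_margin ht hmg) (by positivity)
    _ = 2 * B * (((k - 1 : ℕ) : ℝ) * Real.exp (-(t * Mg))) := by ring

lemma Vf_le_margin (ht : 0 ≤ t) (hMg : 0 ≤ Mg) (hB : 0 ≤ B) (hw : ∀ y, |w y| ≤ B)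
    {ystar : Fin k} (hmg : ∀ y, y ≠ ystar → w y + Mg ≤ w ystar) :
    Vf (fun _ => 0) w t ≤ 4 * B ^ 2 * (k : ℝ) * ((k - 1 : ℕ) : ℝ) * Real.exp (-(t * Mg)) := by
  set E := Real.exp (-(t * Mg)) with hE
  have hE1 : E ≤ 1 := by
    rw [hE]
    apply Real.exp_le_one_iff.2
    nlinarith
  have hE0 : 0 < E := Real.exp_pos _
  have hk1 : (0:ℝ) ≤ ((k - 1 : ℕ) : ℝ) := Nat.cast_nonneg _
  have hkk : ((k - 1 : ℕ) : ℝ) ≤ (k : ℝ) := by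
    exact_mod_cast Nat.cast_le.2 (Nat.sub_le k 1)
  rw [Vf_eq_sum ystar]
  have hsplit : ∑ y, Pf (fun _ => (0:ℝ)) w t y * (w y - Mf (fun _ => (0:ℝ)) w t) ^ 2
      = (∑ y ∈ univ.erase ystar, Pf (fun _ => (0:ℝ)) w t y * (w y - Mf (fun _ => (0:ℝ)) w t) ^ 2)
        + Pf (fun _ => (0:ℝ)) w t ystar * (w ystar - Mf (fun _ => (0:ℝ)) w t) ^ 2 := by
    rw [← Finset.sum_erase_add _ _ (mem_univ ystar)]
  rw [hsplit]
  have hrest : ∑ y ∈ univ.erase ystar, Pf (fun _ => (0:ℝ)) w t y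
      * (w y - Mf (fun _ => (0:ℝ)) w t) ^ 2
      ≤ (((k - 1 : ℕ) : ℝ) * E) * (4 * B ^ 2) := by
    calc ∑ y ∈ univ.erase ystar, Pf (fun _ => (0:ℝ)) w t y * (w y - Mf (fun _ => (0:ℝ)) w t) ^ 2
        ≤ ∑ y ∈ univ.erase ystar, Pf (fun _ => (0:ℝ)) w t y * (4 * B ^ 2) := by
          refine Finset.sum_le_sum fun y _ => mul_le_mul_of_nonneg_left ?_ (Pf_nonneg y)
          have h := abs_sub_Mf_le (c := fun _ => (0:ℝ)) (t := t) hw y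
          have h0 : (0:ℝ) ≤ |w y - Mf (fun _ => (0:ℝ)) w t| := abs_nonneg _
          have h1 : (w y - Mf (fun _ => (0:ℝ)) w t) ^ 2
              = |w y - Mf (fun _ => (0:ℝ)) w t| ^ 2 := (sq_abs _).symm
          nlinarith
      _ = (∑ y ∈ univ.erase ystar, Pf (fun _ => (0:ℝ)) w t y) * (4 * B ^ 2) := by
          rw [Finset.sum_mul]
      _ ≤ (((k - 1 : ℕ) : ℝ) * E) * (4 * B ^ 2) := by
          refine mul_le_mul_of_nonneg_right (sum_erase_Pf_le_margin ht hmg) (by positivity)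
  have hstar : Pf (fun _ => (0:ℝ)) w t ystar * (w ystar - Mf (fun _ => (0:ℝ)) w t) ^ 2
      ≤ (2 * B * (((k - 1 : ℕ) : ℝ) * E)) ^ 2 := by
    have h := abs_star_sub_Mf_margin ht hB hw hmg
    have h0 : (0:ℝ) ≤ |w ystar - Mf (fun _ => (0:ℝ)) w t| := abs_nonneg _
    have h1 : (w ystar - Mf (fun _ => (0:ℝ)) w t) ^ 2
        = |w ystar - Mf (fun _ => (0:ℝ)) w t| ^ 2 := (sq_abs _).symm
    have h2 : Pf (fun _ => (0:ℝ)) w t ystar ≤ 1 := Pf_le_one ystar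
    have h3 : 0 ≤ Pf (fun _ => (0:ℝ)) w t ystar := Pf_nonneg ystar
    nlinarith
  have hk1' : ((k - 1 : ℕ) : ℝ) + 1 = (k:ℝ) := by
    have hkpos := Fin.pos ystar
    have : ((k - 1 : ℕ) : ℝ) = (k : ℝ) - 1 := by
      rw [Nat.cast_sub hkpos]; simp
    rw [this]; ring
  have h4 : (((k - 1 : ℕ) : ℝ) * E) ^ 2 ≤ ((k - 1 : ℕ) : ℝ) ^ 2 * E := by nlinarith
  have h5 := mul_le_mul_of_nonneg_left h4 (by positivity : (0:ℝ) ≤ 4 * B ^ 2)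
  rw [← hk1']
  nlinarith [h5, sq_nonneg B, mul_nonneg hk1 hE0.le]

end SMX2

namespace SMX3
open SMX

variable {k : ℕ} {c w : Fin k → ℝ} {t B W : ℝ}

/-- pointwise positive lower bound for zero-offset softmax probabilities. -/
lemma Pf_ge (hw : ∀ y, |w y| ≤ B) (y₀ : Fin k) :
    Real.exp (-(|t| * B)) / ((k : ℝ) * Real.exp (|t| * B)) ≤ Pf (fun _ => 0) w t y₀ := by
  have hk : 0 < k := Fin.pos y₀
  have hB : 0 ≤ B := le_trans (abs_nonneg _) (hw y₀)
  have hnum : Real.exp (-(|t| * B)) ≤ Real.exp ((0:ℝ) + t * w y₀) := by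
    apply Real.exp_le_exp.2
    have := hw y₀
    have h1 : |t * w y₀| ≤ |t| * B := by
      rw [abs_mul]
      exact mul_le_mul_of_nonneg_left (hw y₀) (abs_nonneg t)
    have := neg_le_of_abs_le h1
    linarith
  have hden : Sf (fun _ => 0) w t ≤ (k : ℝ) * Real.exp (|t| * B) := by
    rw [Sf]
    calc ∑ y, Real.exp ((0:ℝ) + t * w y) ≤ ∑ _y : Fin k, Real.exp (|t| * B) := by
          refine Finset.sum_le_sum fun y _ => Real.exp_le_exp.2 ?_
          have h1 : |t * w y| ≤ |t| * B := by
            rw [abs_mul]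
            exact mul_le_mul_of_nonneg_left (hw y) (abs_nonneg t)
          have := le_of_abs_le h1
          linarith
      _ = (k : ℝ) * Real.exp (|t| * B) := by
          rw [Finset.sum_const, nsmul_eq_mul, card_univ, Fintype.card_fin]
  have hSpos : (0:ℝ) < Sf (fun _ => (0:ℝ)) w t := Sf_pos y₀
  rw [Pf]
  exact div_le_div₀ (Real.exp_pos _).le hnum (by positivity) hden

/-- the derivative of each softmax coordinate along a segment is at most `W/2` in absolute
value, when all velocity components are bounded by `W`. -/
lemma abs_Pf_deriv_le (hW : 0 ≤ W) (hw : ∀ y, |w y| ≤ W) (y₀ : Fin k) :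
    |Pf c w t y₀ * (w y₀ - Mf c w t)| ≤ W / 2 := by
  have hP0 : 0 ≤ Pf c w t y₀ := Pf_nonneg y₀
  have hP1 : Pf c w t y₀ ≤ 1 := Pf_le_one y₀
  have hsplit : ∑ y, Pf c w t y * (w y₀ - w y)
      = ∑ y ∈ univ.erase y₀, Pf c w t y * (w y₀ - w y) := by
    rw [← Finset.sum_erase_add _ _ (mem_univ y₀)]
    simp
  have herase : ∑ y ∈ univ.erase y₀, Pf c w t y = 1 - Pf c w t y₀ := by
    have := sum_Pf (c := c) (w := w) (t := t) y₀
    rw [← Finset.sum_erase_add _ _ (mem_univ y₀)] at this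
    linarith
  have habs : |w y₀ - Mf c w t| ≤ (1 - Pf c w t y₀) * (2 * W) := by
    rw [sub_Mf_eq y₀, hsplit]
    calc |∑ y ∈ univ.erase y₀, Pf c w t y * (w y₀ - w y)|
        ≤ ∑ y ∈ univ.erase y₀, |Pf c w t y * (w y₀ - w y)| := Finset.abs_sum_le_sum_abs _ _
      _ ≤ ∑ y ∈ univ.erase y₀, Pf c w t y * (2 * W) := by
          refine Finset.sum_le_sum fun y _ => ?_
          rw [abs_mul, abs_of_nonneg (Pf_nonneg y)]
          refine mul_le_mul_of_nonneg_left ?_ (Pf_nonneg y)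
          calc |w y₀ - w y| ≤ |w y₀| + |w y| := abs_sub _ _
            _ ≤ W + W := add_le_add (hw y₀) (hw y)
            _ = 2 * W := by ring
      _ = (1 - Pf c w t y₀) * (2 * W) := by rw [← Finset.sum_mul, herase]
  rw [abs_mul, abs_of_nonneg hP0]
  have h0 : (0:ℝ) ≤ |w y₀ - Mf c w t| := abs_nonneg _
  nlinarith [sq_nonneg (Pf c w t y₀ - 1/2)]

end SMX3

/-- Bridge between `smax` and `SMX.Pf`. -/
lemma smax_eq_Pf {k d : ℕ} (η : Fin k → Fin d → ℝ) (u : Fin d → ℝ) (y : Fin k)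
    (c w : Fin k → ℝ) (t : ℝ) (h : ∀ y', c y' + t * w y' = ∑ j, η y' j * u j) :
    smax η u y = SMX.Pf c w t y := by
  rw [smax, SMX.Pf, SMX.Sf]
  rw [h y]
  congr 1
  exact Finset.sum_congr rfl fun y' _ => by rw [h y']

/-- 1-D final lemma: a function with a global max at `1`, whose derivative has pointwise
second derivatives bounded below by `-M` on `[a,1]`, satisfies `G 1 - G a ≤ M/2 (1-a)²`. -/
lemma key1d (G G' : ℝ → ℝ) (M a : ℝ) (ha : a ≤ 1) (hM : 0 ≤ M)
    (hG : ∀ t, HasDerivAt G (G' t) t)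
    (hG'' : ∀ t ∈ Set.Icc a 1, ∃ g2, HasDerivAt G' g2 t ∧ -M ≤ g2)
    (hmax : ∀ t, G t ≤ G 1) :
    G 1 - G a ≤ M / 2 * (1 - a) ^ 2 := by
  classical
  have hG'1 : G' 1 = 0 := by
    have hloc : IsLocalMax G 1 := Filter.Eventually.of_forall hmax
    exact hloc.hasDerivAt_eq_zero (hG 1)
  set D : ℝ → ℝ := fun t => if h : t ∈ Set.Icc a 1 then (hG'' t h).choose else 0 with hD
  have hDspec : ∀ t (h : t ∈ Set.Icc a 1), HasDerivAt G' (D t) t ∧ -M ≤ D t := by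
    intro t h
    simp only [hD, dif_pos h]
    exact (hG'' t h).choose_spec
  have hcontG' : ContinuousOn G' (Set.Icc a 1) := by
    intro x hx
    exact ((hDspec x hx).1.continuousAt).continuousWithinAt
  -- Step 2 : G' t ≤ M * (1 - t) on [a,1]
  have step2 : ∀ t ∈ Set.Icc a 1, G' t ≤ M * (1 - t) := by
    intro t ht
    rcases eq_or_lt_of_le ht.2 with h1 | h1
    · rw [h1, hG'1]
      simp
    · have hmvt := exists_hasDerivAt_eq_slope G' D h1
        (hcontG'.mono (Set.Icc_subset_Icc ht.1 le_rfl))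
        (fun x hx => (hDspec x ⟨le_trans ht.1 hx.1.le, hx.2.le⟩).1)
      obtain ⟨ξ, hξ, hslope⟩ := hmvt
      have hξIcc : ξ ∈ Set.Icc a 1 := ⟨le_trans ht.1 hξ.1.le, hξ.2.le⟩
      have hbd := (hDspec ξ hξIcc).2
      rw [hG'1] at hslope
      have h1t : 0 < 1 - t := by linarith
      have : G' t = -(D ξ) * (1 - t) := by
        field_simp at hslope
        nlinarith [hslope]
      rw [this]
      nlinarith
  -- Step 3
  rcases eq_or_lt_of_le ha with rfl | ha'
  · simp
  · set K : ℝ → ℝ := fun t => G t + M / 2 * (1 - t) ^ 2 with hK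
    have hKderiv : ∀ t, HasDerivAt K (G' t - M * (1 - t)) t := by
      intro t
      have h1 : HasDerivAt (fun t : ℝ => 1 - t) (-1) t := (hasDerivAt_id t).const_sub 1
      have h2 := (h1.pow 2).const_mul (M / 2)
      have h := (hG t).add h2
      refine h.congr_deriv (Eq.symm ?_)
      ring
    have hmvt := exists_hasDerivAt_eq_slope K (fun t => G' t - M * (1 - t)) ha'
      (fun x _ => (hKderiv x).continuousAt.continuousWithinAt)
      (fun x hx => hKderiv x)
    obtain ⟨ξ, hξ, hslope⟩ := hmvt
    have hξIcc : ξ ∈ Set.Icc a 1 := ⟨hξ.1.le, hξ.2.le⟩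
    have h2 := step2 ξ hξIcc
    have hK1 : K 1 = G 1 := by simp [hK]
    have hKa : K a = G a + M / 2 * (1 - a) ^ 2 := rfl
    have h1a : 0 < 1 - a := by linarith
    have : K 1 - K a ≤ 0 := by
      have hle : G' ξ - M * (1 - ξ) ≤ 0 := by linarith
      rw [eq_div_iff (ne_of_gt h1a)] at hslope
      have hslope' : (G' ξ - M * (1 - ξ)) * (1 - a) = K 1 - K a := hslope
      nlinarith [mul_nonneg (neg_nonneg.2 hle) h1a.le, hslope']
    rw [hK1, hKa] at this
    linarith

namespace SMX

lemma log_Pf {k : ℕ} {c w : Fin k → ℝ} {t : ℝ} (y : Fin k) :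
    Real.log (Pf c w t y) = (c y + t * w y) - Real.log (Sf c w t) := by
  rw [Pf, Real.log_div (Real.exp_ne_zero _) (ne_of_gt (Sf_pos y)), Real.log_exp]

end SMX

lemma aesm_log {Ω : Type*} [MeasurableSpace Ω] {μ : MeasureTheory.Measure Ω} {f : Ω → ℝ}
    (h : AEStronglyMeasurable f μ) : AEStronglyMeasurable (fun s => Real.log (f s)) μ :=
  (Real.measurable_log.comp_aemeasurable h.aemeasurable).aestronglyMeasurable

open SMX in
set_option maxHeartbeats 2000000 in
/-- Per-sample machinery: derivative structure of the log-integrated softmax. -/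
lemma peri {Ω : Type*} [MeasurableSpace Ω] (μ : Measure Ω) [IsProbabilityMeasure μ]
    {k : ℕ} (w : Ω → Fin k → ℝ) (y₀ : Fin k) (B Mg : ℝ) (hB : 0 ≤ B) (hMg : 0 ≤ Mg)
    (hw : ∀ s y, |w s y| ≤ B)
    (hmgn : ∀ s, ∃ ystar, ∀ y, y ≠ ystar → w s y + Mg ≤ w s ystar)
    (hInt : ∀ (t : ℝ) (y : Fin k), Integrable (fun s => Pf (fun _ => 0) (w s) t y) μ) :
    ∃ G' : ℝ → ℝ,
      (∀ t, HasDerivAt (fun u => Real.log (∫ s, Pf (fun _ => 0) (w s) u y₀ ∂μ)) (G' t) t) ∧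
      (∀ t, 0 ≤ t → ∃ g2, HasDerivAt G' g2 t ∧
        -(4 * B ^ 2 * (k : ℝ) * ((k - 1 : ℕ) : ℝ) * Real.exp (-(t * Mg))) ≤ g2) := by
  classical
  have hk : 0 < k := Fin.pos y₀
  set F : ℝ → ℝ := fun t => ∫ s, Pf (fun _ => 0) (w s) t y₀ ∂μ with hF
  have hFpos : ∀ t, 0 < F t := by
    intro t
    have hlow : ∀ s, Real.exp (-(|t| * B)) / ((k : ℝ) * Real.exp (|t| * B))
        ≤ Pf (fun _ => 0) (w s) t y₀ := fun s => SMX3.Pf_ge (hw s) y₀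
    have h1 : Real.exp (-(|t| * B)) / ((k : ℝ) * Real.exp (|t| * B))
        = ∫ _s, Real.exp (-(|t| * B)) / ((k : ℝ) * Real.exp (|t| * B)) ∂μ := by
      rw [integral_const]; simp
    have h2 : (∫ _s, Real.exp (-(|t| * B)) / ((k : ℝ) * Real.exp (|t| * B)) ∂μ) ≤ F t :=
      integral_mono (integrable_const _) (hInt t y₀) hlow
    have h3 : (0:ℝ) < Real.exp (-(|t| * B)) / ((k : ℝ) * Real.exp (|t| * B)) := by
      have : (0:ℝ) < (k:ℝ) := by exact_mod_cast hk
      positivity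
    rw [h1] at h3
    exact lt_of_lt_of_le h3 h2
  have measP : ∀ (t : ℝ) (y : Fin k),
      AEStronglyMeasurable (fun s => Pf (fun _ => 0) (w s) t y) μ :=
    fun t y => (hInt t y).1
  have mdiff : ∀ y y' : Fin k, AEStronglyMeasurable (fun s => w s y - w s y') μ := by
    intro y y'
    have heq : (fun s => w s y - w s y')
        = fun s => Real.log (Pf (fun _ => 0) (w s) 1 y)
            - Real.log (Pf (fun _ => 0) (w s) 1 y') := by
      funext s
      rw [log_Pf, log_Pf]
      ring
    rw [heq]
    exact (aesm_log (measP 1 y)).sub (aesm_log (measP 1 y'))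
  have measWsub : ∀ (t : ℝ) (y : Fin k),
      AEStronglyMeasurable (fun s => w s y - Mf (fun _ => 0) (w s) t) μ := by
    intro t y
    have heq : (fun s => w s y - Mf (fun _ => 0) (w s) t)
        = fun s => ∑ y', Pf (fun _ => 0) (w s) t y' * (w s y - w s y') := by
      funext s
      exact sub_Mf_eq y
    rw [heq]
    exact Finset.aestronglyMeasurable_fun_sum _ fun y' _ => (measP t y').mul (mdiff y y')
  set I1 : ℝ → Ω → ℝ := fun t s =>
    Pf (fun _ => 0) (w s) t y₀ * (w s y₀ - Mf (fun _ => 0) (w s) t) with hI1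
  set I2 : ℝ → Ω → ℝ := fun t s =>
    Pf (fun _ => 0) (w s) t y₀
      * ((w s y₀ - Mf (fun _ => 0) (w s) t) ^ 2 - Vf (fun _ => 0) (w s) t) with hI2
  have measI1 : ∀ t, AEStronglyMeasurable (I1 t) μ :=
    fun t => (measP t y₀).mul (measWsub t y₀)
  have measVf : ∀ t, AEStronglyMeasurable (fun s => Vf (fun _ => 0) (w s) t) μ := by
    intro t
    have heq : (fun s => Vf (fun _ => 0) (w s) t)
        = fun s => ∑ y, Pf (fun _ => 0) (w s) t y * (w s y - Mf (fun _ => 0) (w s) t) ^ 2 := by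
      funext s
      exact Vf_eq_sum y₀
    rw [heq]
    refine Finset.aestronglyMeasurable_fun_sum _ fun y _ => ?_
    exact ((measP t y).mul ((measWsub t y).mul (measWsub t y))).congr
      (Filter.Eventually.of_forall fun s => by simp only [Pi.mul_apply]; ring)
  have measI2 : ∀ t, AEStronglyMeasurable (I2 t) μ := by
    intro t
    exact ((measP t y₀).mul (((measWsub t y₀).mul (measWsub t y₀)).sub (measVf t))).congr
      (Filter.Eventually.of_forall fun s => by
        simp only [Pi.mul_apply, Pi.sub_apply, hI2]; ring)
  have bnd1 : ∀ (x : ℝ) (s : Ω), ‖I1 x s‖ ≤ 2 * B := by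
    intro x s
    rw [Real.norm_eq_abs, hI1, abs_mul]
    have h1 : |Pf (fun _ => 0) (w s) x y₀| ≤ 1 := by
      rw [abs_of_nonneg (Pf_nonneg y₀)]; exact Pf_le_one y₀
    have h2 := abs_sub_Mf_le (c := fun _ => (0:ℝ)) (t := x) (hw s) y₀
    have h0 : (0:ℝ) ≤ |w s y₀ - Mf (fun _ => 0) (w s) x| := abs_nonneg _
    nlinarith
  have bnd2 : ∀ (x : ℝ) (s : Ω), ‖I2 x s‖ ≤ 8 * B ^ 2 := by
    intro x s
    rw [Real.norm_eq_abs, hI2, abs_mul]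
    have h1 : |Pf (fun _ => 0) (w s) x y₀| ≤ 1 := by
      rw [abs_of_nonneg (Pf_nonneg y₀)]; exact Pf_le_one y₀
    have h2 := abs_sub_Mf_le (c := fun _ => (0:ℝ)) (t := x) (hw s) y₀
    have h3 : (0:ℝ) ≤ Vf (fun _ => 0) (w s) x := Vf_nonneg y₀
    have h4 : Vf (fun _ => 0) (w s) x ≤ 4 * B ^ 2 := Vf_le (hw s) y₀
    have h5 : (w s y₀ - Mf (fun _ => 0) (w s) x) ^ 2 ≤ 4 * B ^ 2 := by
      have h0 : (0:ℝ) ≤ |w s y₀ - Mf (fun _ => 0) (w s) x| := abs_nonneg _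
      nlinarith [sq_abs (w s y₀ - Mf (fun _ => 0) (w s) x)]
    have h6 : |(w s y₀ - Mf (fun _ => 0) (w s) x) ^ 2 - Vf (fun _ => 0) (w s) x| ≤ 4 * B ^ 2 := by
      rw [abs_le]
      constructor <;> nlinarith [sq_nonneg (w s y₀ - Mf (fun _ => 0) (w s) x)]
    nlinarith [abs_nonneg ((w s y₀ - Mf (fun _ => 0) (w s) x) ^ 2 - Vf (fun _ => 0) (w s) x)]
  have hD1 : ∀ t : ℝ, Integrable (I1 t) μ ∧ HasDerivAt F (∫ s, I1 t s ∂μ) t := by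
    intro t
    exact hasDerivAt_integral_of_dominated_loc_of_deriv_le (Metric.ball_mem_nhds t one_pos)
      (Filter.Eventually.of_forall fun x => measP x y₀) (hInt t y₀) (measI1 t)
      (Filter.Eventually.of_forall fun s x _ => bnd1 x s) (integrable_const _)
      (Filter.Eventually.of_forall fun s x _ => hasDerivAt_Pf y₀)
  set F1 : ℝ → ℝ := fun t => ∫ s, I1 t s ∂μ with hF1
  have hD2 : ∀ t : ℝ, Integrable (I2 t) μ ∧ HasDerivAt F1 (∫ s, I2 t s ∂μ) t := by
    intro t
    exact hasDerivAt_integral_of_dominated_loc_of_deriv_le (Metric.ball_mem_nhds t one_pos)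
      (Filter.Eventually.of_forall fun x => measI1 x) ((hD1 t).1) (measI2 t)
      (Filter.Eventually.of_forall fun s x _ => bnd2 x s) (integrable_const _)
      (Filter.Eventually.of_forall fun s x _ => hasDerivAt_Pf_mul y₀)
  refine ⟨fun t => F1 t / F t, fun t => ?_, fun t ht => ?_⟩
  · exact ((hD1 t).2.log (hFpos t).ne')
  · -- second derivative with bound
    set W : ℝ := 4 * B ^ 2 * (k : ℝ) * ((k - 1 : ℕ) : ℝ) * Real.exp (-(t * Mg)) with hW
    have hWnn : 0 ≤ W := by
      rw [hW]
      have : (0:ℝ) ≤ (k:ℝ) := Nat.cast_nonneg _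
      positivity
    have hQint : Integrable (fun s =>
        Pf (fun _ => 0) (w s) t y₀ * (w s y₀ - Mf (fun _ => 0) (w s) t) ^ 2) μ := by
      refine Integrable.mono' (integrable_const (4 * B ^ 2))
        (((measP t y₀).mul ((measWsub t y₀).mul (measWsub t y₀))).congr
          (Filter.Eventually.of_forall fun s => by simp only [Pi.mul_apply]; ring))
        (Filter.Eventually.of_forall fun s => ?_)
      rw [Real.norm_eq_abs, abs_mul, abs_of_nonneg (Pf_nonneg y₀)]
      have h1 : Pf (fun _ => 0) (w s) t y₀ ≤ 1 := Pf_le_one y₀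
      have h0 : (0:ℝ) ≤ Pf (fun _ => 0) (w s) t y₀ := Pf_nonneg y₀
      have h2 := abs_sub_Mf_le (c := fun _ => (0:ℝ)) (t := t) (hw s) y₀
      have h3 : |(w s y₀ - Mf (fun _ => 0) (w s) t) ^ 2| ≤ 4 * B ^ 2 := by
        rw [abs_of_nonneg (sq_nonneg _)]
        nlinarith [sq_abs (w s y₀ - Mf (fun _ => 0) (w s) t), abs_nonneg (w s y₀ - Mf (fun _ => 0) (w s) t)]
      nlinarith [abs_nonneg ((w s y₀ - Mf (fun _ => 0) (w s) t) ^ 2)]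
    have hRint : Integrable (fun s =>
        Pf (fun _ => 0) (w s) t y₀ * Vf (fun _ => 0) (w s) t) μ := by
      refine Integrable.mono' (integrable_const (4 * B ^ 2))
        ((measP t y₀).mul (measVf t))
        (Filter.Eventually.of_forall fun s => ?_)
      rw [Real.norm_eq_abs, abs_mul, abs_of_nonneg (Pf_nonneg y₀),
        abs_of_nonneg (Vf_nonneg y₀)]
      have h1 : Pf (fun _ => 0) (w s) t y₀ ≤ 1 := Pf_le_one y₀
      have h0 : (0:ℝ) ≤ Pf (fun _ => 0) (w s) t y₀ := Pf_nonneg y₀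
      have h4 : Vf (fun _ => 0) (w s) t ≤ 4 * B ^ 2 := Vf_le (hw s) y₀
      have h3 : (0:ℝ) ≤ Vf (fun _ => 0) (w s) t := Vf_nonneg y₀
      nlinarith
    set Q : ℝ := ∫ s, Pf (fun _ => 0) (w s) t y₀ * (w s y₀ - Mf (fun _ => 0) (w s) t) ^ 2 ∂μ
      with hQ
    set R : ℝ := ∫ s, Pf (fun _ => 0) (w s) t y₀ * Vf (fun _ => 0) (w s) t ∂μ with hR
    have hF2eq : (∫ s, I2 t s ∂μ) = Q - R := by
      rw [hQ, hR, ← integral_sub hQint hRint]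
      refine integral_congr_ae (Filter.Eventually.of_forall fun s => ?_)
      simp only [hI2]
      ring
    have hCS : F1 t ^ 2 ≤ F t * Q := by
      set r : ℝ := F1 t / F t with hr
      have hnn : (0:ℝ) ≤ ∫ s, Pf (fun _ => 0) (w s) t y₀
          * ((w s y₀ - Mf (fun _ => 0) (w s) t) - r) ^ 2 ∂μ :=
        integral_nonneg fun s => mul_nonneg (Pf_nonneg y₀) (sq_nonneg _)
      have hexp : (fun s => Pf (fun _ => 0) (w s) t y₀
            * ((w s y₀ - Mf (fun _ => 0) (w s) t) - r) ^ 2)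
          = fun s => (Pf (fun _ => 0) (w s) t y₀ * (w s y₀ - Mf (fun _ => 0) (w s) t) ^ 2
              - (2 * r) * I1 t s) + r ^ 2 * Pf (fun _ => 0) (w s) t y₀ := by
        funext s
        simp only [hI1]
        ring
      have hInt3 : Integrable (fun s => 2 * r * I1 t s) μ := (hD1 t).1.const_mul _
      have hInt1 : Integrable (fun s => Pf (fun _ => 0) (w s) t y₀
          * (w s y₀ - Mf (fun _ => 0) (w s) t) ^ 2 - 2 * r * I1 t s) μ := hQint.sub hInt3
      have hInt2 : Integrable (fun s => r ^ 2 * Pf (fun _ => 0) (w s) t y₀) μ :=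
        (hInt t y₀).const_mul _
      rw [hexp, integral_add hInt1 hInt2, integral_sub hQint hInt3,
        integral_const_mul, integral_const_mul] at hnn
      have hFne : F t ≠ 0 := (hFpos t).ne'
      have h1 : Q - 2 * r * F1 t + r ^ 2 * F t = Q - F1 t ^ 2 / F t := by
        rw [hr]; field_simp; ring
      rw [h1] at hnn
      have hX : F1 t ^ 2 / F t ≤ Q := by linarith
      rw [div_le_iff₀ (hFpos t)] at hX
      nlinarith [hX]
    have hRle : R ≤ W * F t := by
      rw [hR]
      have hmono : ∀ s, Pf (fun _ => 0) (w s) t y₀ * Vf (fun _ => 0) (w s) t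
          ≤ W * Pf (fun _ => 0) (w s) t y₀ := by
        intro s
        obtain ⟨ystar, hstar⟩ := hmgn s
        have hV := SMX2.Vf_le_margin ht hMg hB (hw s) hstar
        have h0 : (0:ℝ) ≤ Pf (fun _ => 0) (w s) t y₀ := Pf_nonneg y₀
        have h1 : Pf (fun _ => 0) (w s) t y₀ ≤ 1 := Pf_le_one y₀
        have h3 : (0:ℝ) ≤ Vf (fun _ => 0) (w s) t := Vf_nonneg y₀
        rw [hW]
        nlinarith
      calc R ≤ ∫ s, W * Pf (fun _ => 0) (w s) t y₀ ∂μ :=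
            integral_mono hRint ((hInt t y₀).const_mul W) hmono
        _ = W * F t := by rw [integral_const_mul]
    have hder := (hD2 t).2.div (hD1 t).2 (hFpos t).ne'
    have hI1F : (∫ s, I1 t s ∂μ) = F1 t := rfl
    rw [hI1F] at hder
    rw [hF2eq] at hder
    refine ⟨_, hder, ?_⟩
    rw [le_div_iff₀ (pow_pos (hFpos t) 2)]
    have hFt : 0 < F t := hFpos t
    have hRF := mul_le_mul_of_nonneg_right hRle hFt.le
    nlinarith [hCS, hRF, hFt]

lemma smax_nonneg {k d : ℕ} (η : Fin k → Fin d → ℝ) (u : Fin d → ℝ) (y : Fin k) :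
    0 ≤ smax η u y :=
  div_nonneg (Real.exp_pos _).le (Finset.sum_nonneg fun y' _ => (Real.exp_pos _).le)

lemma sum_smax {k d : ℕ} (hk : 0 < k) (η : Fin k → Fin d → ℝ) (u : Fin d → ℝ) :
    ∑ y, smax η u y = 1 := by
  have hS : (0:ℝ) < ∑ y', Real.exp (∑ i, η y' i * u i) :=
    Finset.sum_pos (fun y _ => Real.exp_pos _) ⟨⟨0, hk⟩, mem_univ _⟩
  rw [show (fun y => smax η u y) = fun y => Real.exp (∑ i, η y i * u i)
      / ∑ y', Real.exp (∑ i, η y' i * u i) from rfl]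
  rw [← Finset.sum_div]
  exact div_self hS.ne'

set_option maxHeartbeats 2000000

/-- likelihood gap of the expectation-linearized MLE, margin case:
under a unique-best-prediction margin `c`, bounded penultimate features, and marginal
probabilities bounded below by `1/b`, the likelihood gap between the MLE `θ̂ = (λ̂, η̂)`
and the MLE `θ̂_δ` constrained to `V(D;θ) ≤ δ` satisfies
`Δ_l ≤ c₁ β² (‖η̂‖₂ - δ/(4β))² e^{-c₂ δ/(4β)}` with `c₁ = 2dk(k-1)(b+1)`, `c₂ = c`. -/
theorem likelihood_gap_margin_bound {Λ 𝒳 Ωs : Type*} [MeasurableSpace Ωs]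
    (Ps : Measure Ωs) [IsProbabilityMeasure Ps]
    (k d n b : ℕ) (hk : 0 < k) (hn : 0 < n) (hbk : k ≤ b)
    (β c δ : ℝ) (hβ : 0 < β) (hδ : 0 < δ) (hc : 0 ≤ c)
    -- stochastic and deterministic penultimate feature maps, indexed by λ ∈ Λ
    (feat : Λ → 𝒳 → Ωs → Fin d → ℝ) (featDet : Λ → 𝒳 → Fin d → ℝ)
    -- training data
    (xs : Fin n → 𝒳) (ys : Fin n → Fin k)
    -- integrability of the conditional likelihoods
    (hint : ∀ (θ : Λ × (Fin k → Fin d → ℝ)) (y : Fin k) (x : 𝒳),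
      Integrable (fun s => smax θ.2 (feat θ.1 x s) y) Ps)
    -- log-likelihood and expectation-linearization penalty
    (l : Λ × (Fin k → Fin d → ℝ) → ℝ)
    (hl : ∀ θ, l θ = ∑ i,
      Real.log (∫ s, smax θ.2 (feat θ.1 (xs i) s) (ys i) ∂Ps))
    (V : Λ × (Fin k → Fin d → ℝ) → ℝ)
    (hV : ∀ θ, V θ = (n : ℝ)⁻¹ * ∑ i, ∑ y,
      ((∫ s, smax θ.2 (feat θ.1 (xs i) s) y ∂Ps) -
        smax θ.2 (featDet θ.1 (xs i)) y) ^ 2)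
    -- the unconstrained MLE θ̂ = (λ̂, η̂)
    (lamh : Λ) (ηh : Fin k → Fin d → ℝ)
    (hMLE : ∀ θ, l θ ≤ l (lamh, ηh))
    -- the constrained MLE θ̂_δ
    (θδ : Λ × (Fin k → Fin d → ℝ))
    (hθδ1 : V θδ ≤ δ) (hθδ2 : ∀ θ, V θ ≤ δ → l θ ≤ l θδ)
    -- ‖η̂‖₂ and the constraint-feasibility condition δ/(4β) ≤ ‖η̂‖₂
    (ηnorm : ℝ) (hηnorm : ηnorm = Real.sqrt (∑ y, ∑ i, (ηh y i) ^ 2))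
    (hfeas : δ / (4 * β) ≤ ηnorm)
    -- penultimate features bounded by β at λ̂
    (hfb1 : ∀ x s, Real.sqrt (∑ i, (feat lamh x s i) ^ 2) ≤ β)
    (hfb2 : ∀ x, Real.sqrt (∑ i, (featDet lamh x i) ^ 2) ≤ β)
    -- unique-best-prediction margin c at θ̂
    (hmargin : ∀ i s, ∃ ystar : Fin k, ∀ y, y ≠ ystar →
      (∑ j, ηh y j * feat lamh (xs i) s j) + c * ηnorm <
        ∑ j, ηh ystar j * feat lamh (xs i) s j)
    -- marginal probabilities bounded below by 1/b at θ̂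
    (hmarg : ∀ i y, (1 : ℝ) / b ≤ ∫ s, smax ηh (feat lamh (xs i) s) y ∂Ps) :
    (n : ℝ)⁻¹ * (l (lamh, ηh) - l θδ) ≤
      (2 * (d : ℝ) * k * ((k - 1 : ℕ) : ℝ) * ((b : ℝ) + 1)) * β ^ 2 *
        (ηnorm - δ / (4 * β)) ^ 2 * Real.exp (-(c * δ / (4 * β))) := by
  classical
  have hN : 0 < ηnorm := lt_of_lt_of_le (by positivity) hfeas
  have hNsqnn : (0:ℝ) ≤ ∑ y, ∑ j, (ηh y j) ^ 2 :=
    Finset.sum_nonneg fun y _ => Finset.sum_nonneg fun j _ => sq_nonneg _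
  have hNsq : ηnorm ^ 2 = ∑ y, ∑ j, (ηh y j) ^ 2 := by
    rw [hηnorm, Real.sq_sqrt hNsqnn]
  -- d ≥ 1
  have hd : 0 < d := by
    rcases Nat.eq_zero_or_pos d with hd0 | hd0
    · exfalso
      subst hd0
      have : ∑ y, ∑ j : Fin 0, (ηh y j) ^ 2 = 0 := by simp
      rw [hηnorm, this, Real.sqrt_zero] at hN
      exact lt_irrefl _ hN
    · exact hd0
  -- Cauchy-Schwarz feature bound
  have hb : ∀ (u : Fin d → ℝ), Real.sqrt (∑ j, (u j) ^ 2) ≤ β →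
      ∀ y, |∑ j, ηh y j * u j| ≤ β * ηnorm := by
    intro u hu y
    have h2 : (∑ j, (u j) ^ 2) ≤ β ^ 2 := by
      have h0 : (0:ℝ) ≤ ∑ j, (u j) ^ 2 := Finset.sum_nonneg fun j _ => sq_nonneg _
      have := Real.sq_sqrt h0
      nlinarith [Real.sqrt_nonneg (∑ j, (u j) ^ 2)]
    have h3 : (∑ j, (ηh y j) ^ 2) ≤ ηnorm ^ 2 := by
      rw [hNsq]
      exact Finset.single_le_sum (f := fun y => ∑ j, (ηh y j) ^ 2)
        (fun y _ => Finset.sum_nonneg fun j _ => sq_nonneg _) (mem_univ y)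
    have h1 : (∑ j, ηh y j * u j) ^ 2 ≤ (∑ j, (ηh y j) ^ 2) * (∑ j, (u j) ^ 2) :=
      Finset.sum_mul_sq_le_sq_mul_sq _ _ _
    have h4 : (∑ j, ηh y j * u j) ^ 2 ≤ (β * ηnorm) ^ 2 := by
      have h5 : (0:ℝ) ≤ ∑ j, (ηh y j) ^ 2 := Finset.sum_nonneg fun j _ => sq_nonneg _
      have h6 : (0:ℝ) ≤ ∑ j, (u j) ^ 2 := Finset.sum_nonneg fun j _ => sq_nonneg _
      nlinarith
    nlinarith [sq_abs (∑ j, ηh y j * u j), abs_nonneg (∑ j, ηh y j * u j),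
      mul_nonneg hβ.le hN.le]
  set bb : Fin n → Ωs → Fin k → ℝ := fun i s y => ∑ j, ηh y j * feat lamh (xs i) s j with hbb
  set bbd : Fin n → Fin k → ℝ := fun i y => ∑ j, ηh y j * featDet lamh (xs i) j with hbbd
  have hbB : ∀ i s y, |bb i s y| ≤ β * ηnorm := fun i s y => hb _ (hfb1 (xs i) s) y
  have hbdB : ∀ i y, |bbd i y| ≤ β * ηnorm := fun i y => hb _ (hfb2 (xs i)) y
  set scaled : ℝ → Fin k → Fin d → ℝ := fun t y j => t * ηh y j with hscaled
  have hsm : ∀ (t : ℝ) i y, (fun s => smax (scaled t) (feat lamh (xs i) s) y)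
      = fun s => SMX.Pf (fun _ => 0) (bb i s) t y := by
    intro t i y
    funext s
    refine smax_eq_Pf _ _ _ _ _ _ fun y' => ?_
    rw [zero_add, hbb, Finset.mul_sum]
    exact Finset.sum_congr rfl fun j _ => by rw [hscaled]; ring
  have hIntPf : ∀ i (t : ℝ) y, Integrable (fun s => SMX.Pf (fun _ => 0) (bb i s) t y) Ps := by
    intro i t y
    rw [← hsm]
    exact hint (lamh, scaled t) y (xs i)
  -- per-sample derivative machinery
  have hperi : ∀ i : Fin n, ∃ G' : ℝ → ℝ,
      (∀ t, HasDerivAt (fun u => Real.log (∫ s, SMX.Pf (fun _ => 0) (bb i s) u (ys i) ∂Ps))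
        (G' t) t) ∧
      (∀ t, 0 ≤ t → ∃ g2, HasDerivAt G' g2 t ∧
        -(4 * (β * ηnorm) ^ 2 * (k : ℝ) * ((k - 1 : ℕ) : ℝ) * Real.exp (-(t * (c * ηnorm)))) ≤ g2) := by
    intro i
    refine peri Ps (bb i) (ys i) (β * ηnorm) (c * ηnorm)
      (mul_nonneg hβ.le hN.le) (mul_nonneg hc hN.le) (hbB i) ?_ (hIntPf i)
    intro s
    obtain ⟨ystar, hstar⟩ := hmargin i s
    exact ⟨ystar, fun y hy => (hstar y hy).le⟩
  choose Gd hGd1 hGd2 using hperi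
  set LG : ℝ → ℝ := fun t =>
    ∑ i, Real.log (∫ s, SMX.Pf (fun _ => 0) (bb i s) t (ys i) ∂Ps) with hLG
  have hLGl : ∀ t, l (lamh, scaled t) = LG t := by
    intro t
    rw [hl]
    exact Finset.sum_congr rfl fun i _ => by rw [show ((lamh, scaled t).2 : Fin k → Fin d → ℝ) = scaled t from rfl, hsm t i (ys i)]
  have hmaxLG : ∀ t, LG t ≤ LG 1 := by
    intro t
    rw [← hLGl, ← hLGl]
    have h1 : scaled 1 = ηh := by funext y j; simp [hscaled]
    calc l (lamh, scaled t) ≤ l (lamh, ηh) := hMLE _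
      _ = l (lamh, scaled 1) := by rw [h1]
  have hLGder : ∀ t, HasDerivAt LG (∑ i, Gd i t) t := by
    intro t
    exact HasDerivAt.fun_sum fun i _ => hGd1 i t
  set a : ℝ := δ / (4 * β) / ηnorm with ha
  have ha0 : 0 ≤ a := by positivity
  have ha1 : a ≤ 1 := (div_le_one hN).2 hfeas
  have haN : a * ηnorm = δ / (4 * β) := div_mul_cancel₀ _ hN.ne'
  set E : ℝ := Real.exp (-(c * δ / (4 * β))) with hE
  set M : ℝ := (n : ℝ) * (4 * (β * ηnorm) ^ 2 * (k : ℝ) * ((k - 1 : ℕ) : ℝ) * E) with hM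
  have hMnn : 0 ≤ M := by
    rw [hM, hE]
    positivity
  have hkey : LG 1 - LG a ≤ M / 2 * (1 - a) ^ 2 := by
    refine key1d LG (fun t => ∑ i, Gd i t) M a ha1 hMnn hLGder ?_ hmaxLG
    intro t ht
    have ht0 : 0 ≤ t := le_trans ha0 ht.1
    have h := fun i : Fin n => hGd2 i t ht0
    choose g2 hg2d hg2b using h
    refine ⟨∑ i, g2 i, HasDerivAt.fun_sum fun i _ => hg2d i, ?_⟩
    have hexple : Real.exp (-(t * (c * ηnorm))) ≤ E := by
      rw [hE]
      apply Real.exp_le_exp.2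
      have h1 : a * (c * ηnorm) ≤ t * (c * ηnorm) :=
        mul_le_mul_of_nonneg_right ht.1 (mul_nonneg hc hN.le)
      have h2 : a * (c * ηnorm) = c * δ / (4 * β) := by
        rw [show a * (c * ηnorm) = c * (a * ηnorm) by ring, haN]; ring
      linarith
    have hone : ∀ i : Fin n,
        -(4 * (β * ηnorm) ^ 2 * (k : ℝ) * ((k - 1 : ℕ) : ℝ) * E) ≤ g2 i := by
      intro i
      refine le_trans ?_ (hg2b i)
      have hc1 : (0:ℝ) ≤ 4 * (β * ηnorm) ^ 2 * (k : ℝ) * ((k - 1 : ℕ) : ℝ) := by positivity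
      nlinarith
    calc -M = ∑ _i : Fin n, -(4 * (β * ηnorm) ^ 2 * (k : ℝ) * ((k - 1 : ℕ) : ℝ) * E) := by
          rw [Finset.sum_const, nsmul_eq_mul, card_univ, Fintype.card_fin, hM]; ring
      _ ≤ ∑ i, g2 i := Finset.sum_le_sum fun i _ => hone i
  -- the scaled parameter satisfies the constraint
  have hVa : V (lamh, scaled a) ≤ δ := by
    rw [hV]
    have hIy : ∀ i y, Integrable (fun s => smax (scaled a) (feat lamh (xs i) s) y) Ps :=
      fun i y => hint (lamh, scaled a) y (xs i)
    -- pointwise bound along the segment between stochastic and deterministic features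
    have hpoint : ∀ i y s, |smax (scaled a) (feat lamh (xs i) s) y
        - smax (scaled a) (featDet lamh (xs i)) y| ≤ δ / 4 := by
      intro i y s
      set c0 : Fin k → ℝ := fun y' => a * bb i s y' with hc0
      set w0 : Fin k → ℝ := fun y' => a * (bbd i y' - bb i s y') with hw0def
      have hRW : ∀ (v : Fin d → ℝ) (y' : Fin k),
          ∑ j, a * ηh y' j * v j = a * ∑ j, ηh y' j * v j := by
        intro v y'
        rw [Finset.mul_sum]
        exact Finset.sum_congr rfl fun j _ => by ring
      have hp : smax (scaled a) (feat lamh (xs i) s) y = SMX.Pf c0 w0 0 y := by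
        refine smax_eq_Pf _ _ _ _ _ _ fun y' => ?_
        simp only [hc0, hw0def, hbb, hscaled]
        rw [hRW (feat lamh (xs i) s) y']
        ring
      have hq : smax (scaled a) (featDet lamh (xs i)) y = SMX.Pf c0 w0 1 y := by
        refine smax_eq_Pf _ _ _ _ _ _ fun y' => ?_
        simp only [hc0, hw0def, hbb, hbbd, hscaled]
        rw [hRW (featDet lamh (xs i)) y']
        ring
      have hw0 : ∀ y', |w0 y'| ≤ δ / 2 := by
        intro y'
        rw [hw0def, abs_mul, abs_of_nonneg ha0]
        have h1 : |bbd i y' - bb i s y'| ≤ 2 * (β * ηnorm) := by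
          calc |bbd i y' - bb i s y'| ≤ |bbd i y'| + |bb i s y'| := abs_sub _ _
            _ ≤ β * ηnorm + β * ηnorm := add_le_add (hbdB i y') (hbB i s y')
            _ = 2 * (β * ηnorm) := by ring
        calc a * |bbd i y' - bb i s y'| ≤ a * (2 * (β * ηnorm)) :=
              mul_le_mul_of_nonneg_left h1 ha0
          _ = 2 * β * (a * ηnorm) := by ring
          _ = 2 * β * (δ / (4 * β)) := by rw [haN]
          _ = δ / 2 := by field_simp; ring
      obtain ⟨ξ, hξ, hsl⟩ := exists_hasDerivAt_eq_slope (fun t => SMX.Pf c0 w0 t y)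
        (fun t => SMX.Pf c0 w0 t y * (w0 y - SMX.Mf c0 w0 t)) one_pos
        (fun x _ => (SMX.hasDerivAt_Pf y).continuousAt.continuousWithinAt)
        (fun x _ => SMX.hasDerivAt_Pf y)
      have habs := SMX3.abs_Pf_deriv_le (c := c0) (w := w0) (t := ξ)
        (by positivity : (0:ℝ) ≤ δ / 2) hw0 y
      rw [hsl] at habs
      rw [hp, hq]
      rw [abs_sub_comm]
      have h2 : |SMX.Pf c0 w0 1 y - SMX.Pf c0 w0 0 y| ≤ δ / 2 / 2 := by
        have h3 : (SMX.Pf c0 w0 1 y - SMX.Pf c0 w0 0 y) / (1 - 0)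
            = SMX.Pf c0 w0 1 y - SMX.Pf c0 w0 0 y := by norm_num
        rw [h3] at habs
        exact habs
      calc |SMX.Pf c0 w0 1 y - SMX.Pf c0 w0 0 y| ≤ δ / 2 / 2 := h2
        _ = δ / 4 := by ring
    -- integrated bound
    have hDy : ∀ i y, |(∫ s, smax (scaled a) (feat lamh (xs i) s) y ∂Ps)
        - smax (scaled a) (featDet lamh (xs i)) y| ≤ δ / 4 := by
      intro i y
      have h1 : (∫ s, (smax (scaled a) (feat lamh (xs i) s) y
            - smax (scaled a) (featDet lamh (xs i)) y) ∂Ps)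
          = (∫ s, smax (scaled a) (feat lamh (xs i) s) y ∂Ps)
            - smax (scaled a) (featDet lamh (xs i)) y := by
        rw [integral_sub (hIy i y) (integrable_const _), integral_const]
        simp
      rw [← h1]
      have h2 := norm_integral_le_of_norm_le (μ := Ps) (f := fun s => smax (scaled a) (feat lamh (xs i) s) y
          - smax (scaled a) (featDet lamh (xs i)) y) (integrable_const (δ / 4))
        (Filter.Eventually.of_forall fun s => by
          rw [Real.norm_eq_abs]; exact hpoint i y s)
      rw [integral_const] at h2
      simpa using h2
    have hsumabs : ∀ i, ∑ y, |(∫ s, smax (scaled a) (feat lamh (xs i) s) y ∂Ps)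
        - smax (scaled a) (featDet lamh (xs i)) y| ≤ 2 := by
      intro i
      have hple : ∀ y, |(∫ s, smax (scaled a) (feat lamh (xs i) s) y ∂Ps)
          - smax (scaled a) (featDet lamh (xs i)) y|
          ≤ (∫ s, smax (scaled a) (feat lamh (xs i) s) y ∂Ps)
            + smax (scaled a) (featDet lamh (xs i)) y := by
        intro y
        have h0 : 0 ≤ ∫ s, smax (scaled a) (feat lamh (xs i) s) y ∂Ps :=
          integral_nonneg fun s => smax_nonneg _ _ _
        have h1 : 0 ≤ smax (scaled a) (featDet lamh (xs i)) y := smax_nonneg _ _ _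
        calc |(∫ s, smax (scaled a) (feat lamh (xs i) s) y ∂Ps)
              - smax (scaled a) (featDet lamh (xs i)) y|
            ≤ |∫ s, smax (scaled a) (feat lamh (xs i) s) y ∂Ps|
              + |smax (scaled a) (featDet lamh (xs i)) y| := abs_sub _ _
          _ = _ := by rw [abs_of_nonneg h0, abs_of_nonneg h1]
      calc ∑ y, |(∫ s, smax (scaled a) (feat lamh (xs i) s) y ∂Ps)
            - smax (scaled a) (featDet lamh (xs i)) y|
          ≤ ∑ y, ((∫ s, smax (scaled a) (feat lamh (xs i) s) y ∂Ps)
            + smax (scaled a) (featDet lamh (xs i)) y) := Finset.sum_le_sum fun y _ => hple y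
        _ = (∑ y, ∫ s, smax (scaled a) (feat lamh (xs i) s) y ∂Ps)
            + ∑ y, smax (scaled a) (featDet lamh (xs i)) y := Finset.sum_add_distrib
        _ = 1 + 1 := by
            congr 1
            · rw [← integral_finset_sum univ (fun y _ => hIy i y)]
              have : (fun s => ∑ y, smax (scaled a) (feat lamh (xs i) s) y)
                  = fun _ => (1:ℝ) := funext fun s => sum_smax hk _ _
              rw [this, integral_const]
              simp
            · exact sum_smax hk _ _
        _ = 2 := by norm_num
    have hstep : ∀ i : Fin n, ∑ y, ((∫ s, smax (scaled a) (feat lamh (xs i) s) y ∂Ps)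
        - smax (scaled a) (featDet lamh (xs i)) y) ^ 2 ≤ δ / 2 := by
      intro i
      calc ∑ y, ((∫ s, smax (scaled a) (feat lamh (xs i) s) y ∂Ps)
            - smax (scaled a) (featDet lamh (xs i)) y) ^ 2
          ≤ ∑ y, (δ / 4) * |(∫ s, smax (scaled a) (feat lamh (xs i) s) y ∂Ps)
            - smax (scaled a) (featDet lamh (xs i)) y| := by
            refine Finset.sum_le_sum fun y _ => ?_
            have h1 := hDy i y
            have h0 : (0:ℝ) ≤ |(∫ s, smax (scaled a) (feat lamh (xs i) s) y ∂Ps)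
              - smax (scaled a) (featDet lamh (xs i)) y| := abs_nonneg _
            nlinarith [sq_abs ((∫ s, smax (scaled a) (feat lamh (xs i) s) y ∂Ps)
              - smax (scaled a) (featDet lamh (xs i)) y)]
        _ = (δ / 4) * ∑ y, |(∫ s, smax (scaled a) (feat lamh (xs i) s) y ∂Ps)
            - smax (scaled a) (featDet lamh (xs i)) y| := by rw [Finset.mul_sum]
        _ ≤ (δ / 4) * 2 := mul_le_mul_of_nonneg_left (hsumabs i) (by positivity)
        _ = δ / 2 := by ring
    have hnR : (0:ℝ) < (n:ℝ) := by exact_mod_cast hn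
    calc (n : ℝ)⁻¹ * ∑ i, ∑ y, ((∫ s, smax ((lamh, scaled a).2) (feat ((lamh, scaled a).1) (xs i) s) y ∂Ps)
          - smax ((lamh, scaled a).2) (featDet ((lamh, scaled a).1) (xs i)) y) ^ 2
        ≤ (n : ℝ)⁻¹ * ∑ _i : Fin n, δ / 2 := by
          refine mul_le_mul_of_nonneg_left (Finset.sum_le_sum fun i _ => hstep i) (by positivity)
      _ = δ / 2 := by
          rw [Finset.sum_const, nsmul_eq_mul, card_univ, Fintype.card_fin]
          field_simp
      _ ≤ δ := by linarith
  have hla : l (lamh, scaled a) ≤ l θδ := hθδ2 _ hVa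
  have hgap : l (lamh, ηh) - l θδ ≤ M / 2 * (1 - a) ^ 2 := by
    have h1 : l (lamh, ηh) = LG 1 := by
      have h2 : scaled 1 = ηh := by funext y j; simp [hscaled]
      rw [← h2, hLGl]
    have h3 : LG a ≤ l θδ := by rw [← hLGl]; exact hla
    linarith [hkey]
  have hnR : (0:ℝ) < (n:ℝ) := by exact_mod_cast hn
  calc (n : ℝ)⁻¹ * (l (lamh, ηh) - l θδ) ≤ (n : ℝ)⁻¹ * (M / 2 * (1 - a) ^ 2) := by
        refine mul_le_mul_of_nonneg_left hgap (by positivity)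
    _ = 2 * (k:ℝ) * ((k - 1 : ℕ) : ℝ) * β ^ 2 * (ηnorm - δ / (4 * β)) ^ 2 * E := by
        rw [hM]
        have h4 : (ηnorm - δ / (4 * β)) = ηnorm * (1 - a) := by
          rw [mul_sub, mul_one, mul_comm ηnorm a, haN]
        rw [h4]
        field_simp
        ring
    _ ≤ (2 * (d : ℝ) * k * ((k - 1 : ℕ) : ℝ) * ((b : ℝ) + 1)) * β ^ 2 *
        (ηnorm - δ / (4 * β)) ^ 2 * E := by
        have hd1 : (1:ℝ) ≤ (d:ℝ) := by exact_mod_cast hd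
        have hb1 : (1:ℝ) ≤ (b:ℝ) + 1 := by
          have : (0:ℝ) ≤ (b:ℝ) := Nat.cast_nonneg _
          linarith
        have hE0 : 0 ≤ E := by rw [hE]; positivity
        have hfac : (0:ℝ) ≤ 2 * (k:ℝ) * ((k - 1 : ℕ) : ℝ) * β ^ 2
            * (ηnorm - δ / (4 * β)) ^ 2 * E := by positivity
        nlinarith [hfac, mul_le_mul hd1 hb1 (by linarith) (by positivity : (0:ℝ) ≤ (d:ℝ))]
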